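/- Split conformal upper coverage bound: Let s_1, ..., s_n, s_{n+1} be exchangeable real random variables that are almost surely distinct, and let τ be the ⌈(n+1)(1−α)⌉-th smallest value among s_1, ..., s_n (with ⌈(n+1)(1−α)⌉ ≤ n). Then P(s_{n+1} ≤ τ) ≤ 1 − α + 1/(n+1). -/

import Mathlib

open MeasureTheory Finset
open scoped ENNReal

section Aux

variable {N : ℕ} {w : Fin N → ℝ}

lemma aux_rank_sort (hw : Function.Injective w) (m : Fin N) :
    (Finset.univ.filter fun i => w i ≤ w (Tuple.sort w m)).card = m + 1 := by
  classical
  have hsm : StrictMono (w ∘ Tuple.sort w) :=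
    (Tuple.monotone_sort w).strictMono_of_injective (hw.comp (Tuple.sort w).injective)
  have h1 : (Finset.univ.filter fun i => w i ≤ w (Tuple.sort w m)) =
      Finset.image (Tuple.sort w)
        (Finset.univ.filter fun i => w (Tuple.sort w i) ≤ w (Tuple.sort w m)) := by
    ext i
    simp only [Finset.mem_image, Finset.mem_filter, Finset.mem_univ, true_and]
    constructor
    · intro h
      exact ⟨(Tuple.sort w).symm i, by simpa using h, by simp⟩
    · rintro ⟨a, ha, rfl⟩; exact ha
  rw [h1, Finset.card_image_of_injective _ (Tuple.sort w).injective]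
  have h2 : (Finset.univ.filter fun i => w (Tuple.sort w i) ≤ w (Tuple.sort w m)) =
      Finset.Iic m := by
    ext i
    have := hsm.le_iff_le (a := i) (b := m)
    simpa [Function.comp] using this
  rw [h2, Fin.card_Iic]

lemma aux_rank_lt (hw : Function.Injective w) {a b : Fin N} (h : w a < w b) :
    (Finset.univ.filter fun j => w j ≤ w a).card <
      (Finset.univ.filter fun j => w j ≤ w b).card := by
  classical
  apply Finset.card_lt_card
  have hsub : (Finset.univ.filter fun j => w j ≤ w a)
      ⊆ (Finset.univ.filter fun j => w j ≤ w b) :=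
    Finset.monotone_filter_right _ fun j _ hj => le_trans hj h.le
  rw [Finset.ssubset_iff_of_subset hsub]
  exact ⟨b, by simp, by simp [not_le.2 h]⟩

lemma aux_rank_injective (hw : Function.Injective w) :
    Function.Injective (fun i => (Finset.univ.filter fun j => w j ≤ w i).card) := by
  intro a b hab
  rcases lt_trichotomy (w a) (w b) with h | h | h
  · exact absurd hab (aux_rank_lt hw h).ne
  · exact hw h
  · exact absurd hab.symm (aux_rank_lt hw h).ne

lemma aux_rank_count (hw : Function.Injective w) {j : ℕ} (hj1 : 1 ≤ j) (hjN : j ≤ N) :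
    (Finset.univ.filter fun i =>
      (Finset.univ.filter fun j' => w j' ≤ w i).card = j).card = 1 := by
  classical
  set c : Fin N → ℕ := fun i => (Finset.univ.filter fun j' => w j' ≤ w i).card with hc
  have hinj : Function.Injective c := aux_rank_injective hw
  have himg : Finset.image c Finset.univ = Finset.Icc 1 N := by
    apply Finset.eq_of_subset_of_card_le
    · intro x hx
      obtain ⟨i, -, rfl⟩ := Finset.mem_image.1 hx
      refine Finset.mem_Icc.2 ⟨?_, ?_⟩
      · exact Nat.one_le_iff_ne_zero.2 (Finset.card_ne_zero_of_mem (by simp : i ∈ _))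
      · exact (Finset.card_filter_le _ _).trans_eq (by simp)
    · rw [Finset.card_image_of_injective _ hinj, Nat.card_Icc]
      simp
  have hjmem : j ∈ Finset.image c Finset.univ := by
    rw [himg]; exact Finset.mem_Icc.2 ⟨hj1, hjN⟩
  obtain ⟨i, -, hi⟩ := Finset.mem_image.1 hjmem
  rw [Finset.card_eq_one]
  refine ⟨i, ?_⟩
  ext a
  simp only [Finset.mem_filter, Finset.mem_univ, true_and, Finset.mem_singleton]
  constructor
  · intro ha; exact hinj (ha.trans hi.symm)
  · rintro rfl; exact hi

lemma aux_rank_perm (w : Fin N → ℝ) (π : Equiv.Perm (Fin N)) (l : Fin N) :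
    (Finset.univ.filter fun j => w (π j) ≤ w (π l)).card
      = (Finset.univ.filter fun j => w j ≤ w (π l)).card := by
  classical
  have h1 : (Finset.univ.filter fun j => w j ≤ w (π l)) =
      Finset.image π (Finset.univ.filter fun j => w (π j) ≤ w (π l)) := by
    ext i
    simp only [Finset.mem_image, Finset.mem_filter, Finset.mem_univ, true_and]
    constructor
    · intro h; exact ⟨π.symm i, by simpa using h, by simp⟩
    · rintro ⟨a, ha, rfl⟩; exact ha
  rw [h1, Finset.card_image_of_injective _ π.injective]

end Aux

/-- Split conformal upper coverage bound: for exchangeable, almost surely distinct scores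
`s₁,…,sₙ,s_{n+1}` and `τ` the `⌈(n+1)(1−α)⌉`-th smallest among `s₁,…,sₙ`,
`P(s_{n+1} ≤ τ) ≤ 1 − α + 1/(n+1)`. -/
theorem split_conformal_upper_coverage
    {Ω : Type*} [MeasurableSpace Ω] (P : Measure Ω) [IsProbabilityMeasure P]
    (n : ℕ) (α : ℝ) (hα : α ∈ Set.Ioo (0 : ℝ) 1)
    (s : Fin (n + 1) → Ω → ℝ) (hmeas : ∀ i, Measurable (s i))
    (hexch : ∀ π : Equiv.Perm (Fin (n + 1)),
      P.map (fun ω => fun i => s (π i) ω) = P.map (fun ω => fun i => s i ω))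
    (hdistinct : ∀ᵐ ω ∂P, Function.Injective fun i => s i ω)
    (k : ℕ) (hk : k = ⌈((n : ℝ) + 1) * (1 - α)⌉₊) (hk1 : 1 ≤ k) (hkn : k ≤ n)
    (τ : Ω → ℝ)
    (hτ : ∀ ω, τ ω = (fun g : Fin n → ℝ => g (Tuple.sort g ⟨k - 1, by omega⟩))
      (fun i : Fin n => s i.castSucc ω)) :
    P {ω | s (Fin.last n) ω ≤ τ ω} ≤ ENNReal.ofReal (1 - α + 1 / ((n : ℝ) + 1)) := by
  classical
  set v : Ω → Fin (n + 1) → ℝ := fun ω i => s i ω with hvdef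
  have hvmeas : Measurable v := measurable_pi_lambda _ fun i => hmeas i
  set c : (Fin (n + 1) → ℝ) → Fin (n + 1) → ℕ :=
    fun w i => (Finset.univ.filter fun j => w j ≤ w i).card with hcdef
  have hcmeas : ∀ i, Measurable fun w => c w i := by
    intro i
    have h : (fun w : Fin (n + 1) → ℝ => c w i)
        = fun w => ∑ j : Fin (n + 1), if w j ≤ w i then 1 else 0 := by
      funext w
      show (Finset.univ.filter fun j => w j ≤ w i).card = _
      rw [Finset.card_filter]
    rw [h]
    exact Finset.measurable_sum _ fun j _ =>
      Measurable.ite (measurableSet_le (measurable_pi_apply j) (measurable_pi_apply i))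
        measurable_const measurable_const
  set A : Fin (n + 1) → ℕ → Set Ω := fun i j => {ω | c (v ω) i = j} with hAdef
  have hAmeas : ∀ i j, MeasurableSet (A i j) := fun i j =>
    ((hcmeas i).comp hvmeas) (measurableSet_singleton j)
  -- Step 1: equal probabilities across indices
  have hAeq : ∀ i j, P (A i j) = P (A (Fin.last n) j) := by
    intro i j
    set π := Equiv.swap (Fin.last n) i with hπ
    have hS : MeasurableSet {w : Fin (n + 1) → ℝ | c w (Fin.last n) = j} :=
      (hcmeas (Fin.last n)) (measurableSet_singleton j)
    have hmeasπ : Measurable fun ω => fun i' => s (π i') ω :=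
      measurable_pi_lambda _ fun i' => hmeas (π i')
    have h1 := congrArg (fun μ => μ {w : Fin (n + 1) → ℝ | c w (Fin.last n) = j}) (hexch π)
    rw [Measure.map_apply hmeasπ hS, Measure.map_apply hvmeas hS] at h1
    have key : ∀ ω : Ω, c (fun i' => s (π i') ω) (Fin.last n) = c (v ω) i := by
      intro ω
      have h2 := aux_rank_perm (v ω) π (Fin.last n)
      have h3 : π (Fin.last n) = i := Equiv.swap_apply_left _ _
      simp only [hcdef]
      rw [← h3]
      exact h2
    have hpre : (fun ω => fun i' => s (π i') ω) ⁻¹' {w | c w (Fin.last n) = j} = A i j := by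
      ext ω
      simp only [Set.mem_preimage, Set.mem_setOf_eq, hAdef, key ω]
    have hpre2 : v ⁻¹' {w | c w (Fin.last n) = j} = A (Fin.last n) j := rfl
    rw [hpre, hpre2] at h1
    exact h1
  -- Step 2: the ranks partition a.e.
  have hsum : ∀ j : ℕ, 1 ≤ j → j ≤ n + 1 → ∑ i : Fin (n + 1), P (A i j) = 1 := by
    intro j hj1 hj2
    have h1 : ∀ i : Fin (n + 1),
        P (A i j) = ∫⁻ ω, (A i j).indicator (1 : Ω → ℝ≥0∞) ω ∂P :=
      fun i => (lintegral_indicator_one (hAmeas i j)).symm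
    calc ∑ i : Fin (n + 1), P (A i j)
        = ∑ i : Fin (n + 1), ∫⁻ ω, (A i j).indicator (1 : Ω → ℝ≥0∞) ω ∂P := by
          exact Finset.sum_congr rfl fun i _ => h1 i
      _ = ∫⁻ ω, ∑ i : Fin (n + 1), (A i j).indicator (1 : Ω → ℝ≥0∞) ω ∂P := by
          rw [lintegral_finset_sum]
          exact fun i _ => measurable_const.indicator (hAmeas i j)
      _ = ∫⁻ _, (1 : ℝ≥0∞) ∂P := by
          apply lintegral_congr_ae
          filter_upwards [hdistinct] with ω hω
          have hw : Function.Injective (v ω) := hω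
          have h2 : ∑ i : Fin (n + 1), (A i j).indicator (1 : Ω → ℝ≥0∞) ω
              = ((Finset.univ.filter fun i : Fin (n + 1) => c (v ω) i = j).card : ℝ≥0∞) := by
            rw [Finset.card_filter, Nat.cast_sum]
            refine Finset.sum_congr rfl fun i _ => ?_
            simp only [Set.indicator_apply, hAdef, Set.mem_setOf_eq]
            split_ifs <;> simp
          rw [h2, aux_rank_count hw hj1 hj2, Nat.cast_one]
      _ = 1 := by simp
  -- Step 3: P(A last j) = 1/(n+1)
  have hlast : ∀ j : ℕ, 1 ≤ j → j ≤ n + 1 →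
      P (A (Fin.last n) j) = ((n : ℝ≥0∞) + 1)⁻¹ := by
    intro j hj1 hj2
    have h1 : ((n : ℝ≥0∞) + 1) * P (A (Fin.last n) j) = 1 := by
      have h2 : ∑ i : Fin (n + 1), P (A i j)
          = ((n : ℝ≥0∞) + 1) * P (A (Fin.last n) j) := by
        rw [Finset.sum_congr rfl fun i _ => hAeq i j, Finset.sum_const, Finset.card_univ]
        simp [nsmul_eq_mul, mul_comm]
      rw [← h2]; exact hsum j hj1 hj2
    have hne0 : ((n : ℝ≥0∞) + 1) ≠ 0 := by simp [add_eq_zero]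
    have hnetop : ((n : ℝ≥0∞) + 1) ≠ ⊤ := by
      simp [ENNReal.add_ne_top]
    calc P (A (Fin.last n) j) = ((n : ℝ≥0∞) + 1)⁻¹ * (((n : ℝ≥0∞) + 1) * P (A (Fin.last n) j)) := by
          rw [← mul_assoc, ENNReal.inv_mul_cancel hne0 hnetop, one_mul]
      _ = ((n : ℝ≥0∞) + 1)⁻¹ := by rw [h1, mul_one]
  -- Step 4: a.e. event equivalence
  have hEeq : {ω | s (Fin.last n) ω ≤ τ ω} =ᵐ[P] {ω | c (v ω) (Fin.last n) ≤ k} := by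
    rw [Filter.eventuallyEq_set]
    filter_upwards [hdistinct] with ω hω
    have hw : Function.Injective (v ω) := hω
    set w : Fin (n + 1) → ℝ := v ω with hwdef
    set g : Fin n → ℝ := fun i => w i.castSucc with hgdef
    have hg : Function.Injective g := fun a b hab => Fin.castSucc_injective n (hw hab)
    have hkn' : k - 1 < n := by omega
    have hτω : τ ω = g (Tuple.sort g ⟨k - 1, hkn'⟩) := hτ ω
    have hcard : (Finset.univ.filter fun i => g i ≤ τ ω).card = k := by
      rw [hτω, aux_rank_sort hg ⟨k - 1, hkn'⟩]
      show k - 1 + 1 = k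
      omega
    have hmem : Tuple.sort g ⟨k - 1, hkn'⟩ ∈ Finset.univ.filter fun i => g i ≤ τ ω := by
      simp [hτω]
    have hsplit : c w (Fin.last n)
        = (Finset.univ.filter fun i : Fin n => g i ≤ w (Fin.last n)).card + 1 := by
      show (Finset.univ.filter fun j => w j ≤ w (Fin.last n)).card = _
      rw [Fin.univ_castSuccEmb, Finset.filter_cons, if_pos le_rfl, Finset.card_cons,
        Finset.filter_map, Finset.card_map]
      rfl
    constructor
    · intro h
      rw [hsplit]
      have hsub : (Finset.univ.filter fun i : Fin n => g i ≤ w (Fin.last n))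
          ⊆ (Finset.univ.filter fun i => g i ≤ τ ω).erase (Tuple.sort g ⟨k - 1, hkn'⟩) := by
        intro i hi
        simp only [Finset.mem_filter, Finset.mem_univ, true_and] at hi
        rw [Finset.mem_erase]
        refine ⟨?_, by simpa using hi.trans h⟩
        intro heq
        have h2 : g i = τ ω := by rw [heq, ← hτω]
        have h3 : g i = w (Fin.last n) := le_antisymm hi (h2 ▸ h)
        have h4 : (i.castSucc : Fin (n + 1)) = Fin.last n := hw h3
        exact absurd h4 (Fin.castSucc_lt_last i).ne
      have h5 := Finset.card_le_card hsub
      rw [Finset.card_erase_of_mem hmem, hcard] at h5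
      omega
    · intro h
      by_contra hlt
      push_neg at hlt
      have hsub : (Finset.univ.filter fun i => g i ≤ τ ω)
          ⊆ (Finset.univ.filter fun i : Fin n => g i ≤ w (Fin.last n)) :=
        Finset.monotone_filter_right _ fun i _ hi => hi.trans hlt.le
      have h5 := Finset.card_le_card hsub
      rw [hcard] at h5
      rw [hsplit] at h
      omega
  -- Step 5: compute the probability
  have hunion : {ω | c (v ω) (Fin.last n) ≤ k}
      = ⋃ j ∈ Finset.Icc 1 k, A (Fin.last n) j := by
    ext ω
    simp only [Set.mem_setOf_eq, Set.mem_iUnion, hAdef, Finset.mem_Icc, exists_prop]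
    constructor
    · intro h
      refine ⟨c (v ω) (Fin.last n), ⟨?_, h⟩, rfl⟩
      have : Fin.last n ∈ Finset.univ.filter fun j => v ω j ≤ v ω (Fin.last n) := by simp
      exact Nat.one_le_iff_ne_zero.2 (Finset.card_ne_zero_of_mem this)
    · rintro ⟨j, ⟨-, hj2⟩, hj⟩
      omega
  have hPcalc : P {ω | c (v ω) (Fin.last n) ≤ k} = (k : ℝ≥0∞) * ((n : ℝ≥0∞) + 1)⁻¹ := by
    rw [hunion, measure_biUnion_finset]
    · rw [Finset.sum_congr rfl fun j hj => hlast j (Finset.mem_Icc.1 hj).1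
        (le_trans (Finset.mem_Icc.1 hj).2 (by omega))]
      rw [Finset.sum_const, Nat.card_Icc]
      simp [nsmul_eq_mul]
    · intro j hj j' hj' hne
      simp only [Function.onFun, Set.disjoint_left, hAdef, Set.mem_setOf_eq]
      intro ω h1 h2
      exact hne (h1 ▸ h2 ▸ rfl)
    · exact fun j _ => hAmeas (Fin.last n) j
  rw [measure_congr hEeq, hPcalc]
  -- Step 6: numeric bound
  have hnp : (0 : ℝ) < (n : ℝ) + 1 := by positivity
  have hx : (0 : ℝ) ≤ ((n : ℝ) + 1) * (1 - α) := by nlinarith [hα.1, hα.2]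
  have hkle : (k : ℝ) ≤ ((n : ℝ) + 1) * (1 - α) + 1 := by
    rw [hk]
    exact (Nat.ceil_lt_add_one hx).le
  have hinv : ((n : ℝ≥0∞) + 1)⁻¹ = ENNReal.ofReal (((n : ℝ) + 1)⁻¹) := by
    rw [ENNReal.ofReal_inv_of_pos hnp]
    congr 1
    rw [ENNReal.ofReal_add (by positivity) zero_le_one]
    simp
  rw [hinv, ← ENNReal.ofReal_natCast k, ← ENNReal.ofReal_mul (by positivity)]
  apply ENNReal.ofReal_le_ofReal
  rw [← div_eq_mul_inv, div_le_iff₀ hnp]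
  have h1 : (1 - α + 1 / ((n : ℝ) + 1)) * ((n : ℝ) + 1)
      = ((n : ℝ) + 1) * (1 - α) + 1 := by
    field_simp
  rw [h1]
  exact hkle
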